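/- Let X, Θ, Y be separable real Hilbert spaces, U = X × Θ with norm ‖(x,θ)‖_U² = ‖x‖_X² + ‖θ‖_Θ², and F : U → Y Lipschitz with constant L. Let H be the class of all maps E : U → Y that are Lipschitz with constant at most R and satisfy ‖E(0)‖_Y ≤ B. Let ρ be a Borel probability measure on X with finite second moment, π a Borel probability measure on Θ with finite second moment, and set ν = ρ ⊗ π. Given points θ⁽¹⁾, …, θ⁽ᴺ⁾ ∈ Θ, let π̂_N = (1/N) Σ_{i=1}^N δ_{θ⁽ⁱ⁾} be the empirical measure and ν̂_N = ρ ⊗ π̂_N. Define J_ν(μ) = inf_{E∈H} R_μ(E) + c(μ,ν) · W₂(μ,ν). Then 0 ≤ J_ν(ν̂_N) − inf_{E∈H} R_ν(E) ≤ 2 · c(ν̂_N, ν) · W₂(π̂_N, π). -/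

import Mathlib

open MeasureTheory
open scoped ENNReal NNReal

noncomputable section

/-- The Hilbert norm on the product `U = X × Θ`: `‖(x, θ)‖_U = √(‖x‖² + ‖θ‖²)`. -/
def nU {X Θ : Type*} [NormedAddCommGroup X] [NormedAddCommGroup Θ] (u : X × Θ) : ℝ :=
  Real.sqrt (‖u.1‖ ^ 2 + ‖u.2‖ ^ 2)

/-- The 2-Wasserstein distance associated with a cost function `d`: the infimum over all
couplings `γ` of `μ` and `μ'` (i.e. probability measures on the product whose marginals are
`μ` and `μ'`) of `(∫ d(u,v)² dγ)^{1/2}`. -/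
def W2 {α : Type*} [MeasurableSpace α] (d : α → α → ℝ) (μ μ' : Measure α) : ℝ :=
  sInf { r : ℝ | ∃ γ : Measure (α × α), IsProbabilityMeasure γ ∧
      γ.map Prod.fst = μ ∧ γ.map Prod.snd = μ' ∧
      r = Real.sqrt (∫ p, d p.1 p.2 ^ 2 ∂γ) }

/-- The squared-error risk `R_ν(E) = ∫ ‖F(u) - E(u)‖² dν(u)`. -/
def risk {X Θ Y : Type*} [NormedAddCommGroup X] [NormedAddCommGroup Θ] [NormedAddCommGroup Y]
    [MeasurableSpace X] [MeasurableSpace Θ] (F E : X × Θ → Y) (ν : Measure (X × Θ)) : ℝ :=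
  ∫ u, ‖F u - E u‖ ^ 2 ∂ν

/-- The hypothesis class `H`: all maps `E : U → Y` that are Lipschitz with constant at most
`R₀` (with respect to the Hilbert product norm on `U`) and satisfy `‖E 0‖ ≤ B`. -/
def Hclass {X Θ Y : Type*} [NormedAddCommGroup X] [NormedAddCommGroup Θ] [NormedAddCommGroup Y]
    (R₀ B : ℝ) : Set (X × Θ → Y) :=
  { E | (∀ u v, ‖E u - E v‖ ≤ R₀ * nU (u - v)) ∧ ‖E 0‖ ≤ B }

/-- The constant `c(ν,ν') = C₁² √(2(∫‖u‖_U² dν + ∫‖u‖_U² dν')) + 2 C₁ C₂`, where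
`C₁ = L + R₀` and `C₂ = ‖F 0‖ + B`. -/
def cShift {X Θ Y : Type*} [NormedAddCommGroup X] [NormedAddCommGroup Θ] [NormedAddCommGroup Y]
    [MeasurableSpace X] [MeasurableSpace Θ] (L R₀ B : ℝ) (F : X × Θ → Y)
    (ν ν' : Measure (X × Θ)) : ℝ :=
  (L + R₀) ^ 2 * Real.sqrt (2 * ((∫ u, nU u ^ 2 ∂ν) + ∫ u, nU u ^ 2 ∂ν'))
    + 2 * (L + R₀) * (‖F 0‖ + B)

/-- The bound objective `J(ν) = inf_{E ∈ H} R_ν(E) + c(ν, ν_dep) W₂(ν, ν_dep)`, where the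
Wasserstein distance on `U = X × Θ` is taken with respect to the Hilbert product norm. -/
def Jobj {X Θ Y : Type*} [NormedAddCommGroup X] [NormedAddCommGroup Θ] [NormedAddCommGroup Y]
    [MeasurableSpace X] [MeasurableSpace Θ] (L R₀ B : ℝ) (F : X × Θ → Y)
    (νdep ν : Measure (X × Θ)) : ℝ :=
  sInf ((fun E => risk F E ν) '' Hclass R₀ B)
    + cShift L R₀ B F ν νdep * W2 (fun u v => nU (u - v)) ν νdep

variable {X Θ Y : Type*}
  [NormedAddCommGroup X] [InnerProductSpace ℝ X] [CompleteSpace X]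
  [SecondCountableTopology X] [MeasurableSpace X] [BorelSpace X]
  [NormedAddCommGroup Θ] [InnerProductSpace ℝ Θ] [CompleteSpace Θ]
  [SecondCountableTopology Θ] [MeasurableSpace Θ] [BorelSpace Θ]
  [NormedAddCommGroup Y] [InnerProductSpace ℝ Y] [CompleteSpace Y]
  [SecondCountableTopology Y]


section Aux

/-! ### Basic facts about the Hilbert product norm `nU` -/

lemma nU_nonneg' {X Θ : Type*} [NormedAddCommGroup X] [NormedAddCommGroup Θ] (u : X × Θ) :
    0 ≤ nU u := Real.sqrt_nonneg _

lemma nU_sq' {X Θ : Type*} [NormedAddCommGroup X] [NormedAddCommGroup Θ] (u : X × Θ) :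
    nU u ^ 2 = ‖u.1‖ ^ 2 + ‖u.2‖ ^ 2 :=
  Real.sq_sqrt (by positivity)

lemma nU_eq_withLp {X Θ : Type*} [NormedAddCommGroup X] [NormedAddCommGroup Θ] (u : X × Θ) :
    nU u = ‖(WithLp.equiv 2 (X × Θ)).symm u‖ := by
  rw [WithLp.prod_norm_eq_of_L2]; rfl

lemma nU_sub_le' {X Θ : Type*} [NormedAddCommGroup X] [NormedAddCommGroup Θ] (u v : X × Θ) :
    nU (u - v) ≤ nU u + nU v := by
  rw [nU_eq_withLp, nU_eq_withLp u, nU_eq_withLp v, WithLp.equiv_symm_apply,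
    WithLp.toLp_sub]
  exact norm_sub_le _ _

lemma nU_sub_comm {X Θ : Type*} [NormedAddCommGroup X] [NormedAddCommGroup Θ] (u v : X × Θ) :
    nU (u - v) = nU (v - u) := by
  simp only [nU, Prod.fst_sub, Prod.snd_sub, norm_sub_rev]

lemma nU_le_add_norms {X Θ : Type*} [NormedAddCommGroup X] [NormedAddCommGroup Θ] (u : X × Θ) :
    nU u ≤ ‖u.1‖ + ‖u.2‖ := by
  rw [show ‖u.1‖ + ‖u.2‖ = Real.sqrt ((‖u.1‖ + ‖u.2‖) ^ 2) from
    (Real.sqrt_sq (by positivity)).symm]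
  exact Real.sqrt_le_sqrt (by nlinarith [norm_nonneg u.1, norm_nonneg u.2])

lemma nU_pair_sub {X Θ : Type*} [NormedAddCommGroup X] [NormedAddCommGroup Θ]
    (x : X) (a b : Θ) : nU ((x, a) - (x, b)) = ‖a - b‖ := by
  have h : (x, a) - (x, b) = ((0 : X), a - b) := by
    simp [Prod.ext_iff]
  rw [h]
  simp only [nU, norm_zero]
  rw [show (0:ℝ) ^ 2 + ‖a - b‖ ^ 2 = ‖a - b‖ ^ 2 by ring]
  exact Real.sqrt_sq (norm_nonneg _)

lemma continuous_nU {X Θ : Type*} [NormedAddCommGroup X] [NormedAddCommGroup Θ] :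
    Continuous (nU : X × Θ → ℝ) :=
  Real.continuous_sqrt.comp (((continuous_norm.comp continuous_fst).pow 2).add
    ((continuous_norm.comp continuous_snd).pow 2))

lemma continuous_of_nU_lip {X Θ Y : Type*} [NormedAddCommGroup X] [NormedAddCommGroup Θ]
    [NormedAddCommGroup Y] {E : X × Θ → Y} {K : ℝ} (hK : 0 ≤ K)
    (h : ∀ u v, ‖E u - E v‖ ≤ K * nU (u - v)) : Continuous E := by
  refine (LipschitzWith.of_dist_le_mul (K := (2 * K).toNNReal) fun u v => ?_).continuous
  rw [dist_eq_norm, Real.coe_toNNReal _ (by positivity), dist_eq_norm]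
  calc ‖E u - E v‖ ≤ K * nU (u - v) := h u v
    _ ≤ K * (‖(u - v).1‖ + ‖(u - v).2‖) :=
        mul_le_mul_of_nonneg_left (nU_le_add_norms _) hK
    _ ≤ K * (‖u - v‖ + ‖u - v‖) := by
        have h1 := norm_fst_le (u - v); have h2 := norm_snd_le (u - v)
        nlinarith
    _ = 2 * K * ‖u - v‖ := by ring

/-! ### A small real-infimum lemma -/

lemma le_mul_sInf {c d : ℝ} {S : Set ℝ} (hc : 0 ≤ c) (hS : S.Nonempty)
    (h0 : ∀ r ∈ S, 0 ≤ r) (h : ∀ r ∈ S, d ≤ c * r) : d ≤ c * sInf S := by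
  rcases hc.eq_or_lt with rfl | hc'
  · obtain ⟨r, hr⟩ := hS
    simpa using (h r hr).trans_eq (zero_mul r)
  · have h1 : d / c ≤ sInf S :=
      le_csInf hS fun r hr => (div_le_iff₀ hc').mpr (by rw [mul_comm]; exact h r hr)
    calc d = c * (d / c) := by field_simp
      _ ≤ c * sInf S := mul_le_mul_of_nonneg_left h1 hc

lemma sInf_nonneg_of_forall {S : Set ℝ} (h0 : ∀ r ∈ S, 0 ≤ r) : 0 ≤ sInf S := by
  rcases S.eq_empty_or_nonempty with rfl | hS
  · simp [Real.sInf_empty]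
  · exact le_csInf hS h0

end Aux

section MeasureAux

variable {X Θ Y : Type*}
  [NormedAddCommGroup X] [InnerProductSpace ℝ X] [CompleteSpace X]
  [SecondCountableTopology X] [MeasurableSpace X] [BorelSpace X]
  [NormedAddCommGroup Θ] [InnerProductSpace ℝ Θ] [CompleteSpace Θ]
  [SecondCountableTopology Θ] [MeasurableSpace Θ] [BorelSpace Θ]
  [NormedAddCommGroup Y] [InnerProductSpace ℝ Y] [CompleteSpace Y]
  [SecondCountableTopology Y]

/-- Transfer an integral along a marginal map. -/
lemma integral_comp_marginal {α β : Type*} [MeasurableSpace α] [MeasurableSpace β]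
    {μ : Measure α} {g : α → β} (hg : Measurable g) {f : β → ℝ}
    (hf : AEStronglyMeasurable f (μ.map g)) :
    ∫ y, f y ∂(μ.map g) = ∫ x, f (g x) ∂μ :=
  integral_map hg.aemeasurable hf

lemma integrable_comp_marginal {α β : Type*} [MeasurableSpace α] [MeasurableSpace β]
    {μ : Measure α} {g : α → β} (hg : Measurable g) {f : β → ℝ}
    (hf : AEStronglyMeasurable f (μ.map g)) (h : Integrable f (μ.map g)) :
    Integrable (fun x => f (g x)) μ :=
  (integrable_map_measure hf hg.aemeasurable).mp h

/-- Integrability of `nU` itself from integrability of its square. -/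
lemma integrable_nU_of_sq {μ : Measure (X × Θ)} [IsProbabilityMeasure μ]
    (hμ : Integrable (fun u => nU u ^ 2) μ) : Integrable (fun u => nU u) μ := by
  refine ((integrable_const (1 : ℝ)).add hμ).mono'
    continuous_nU.aestronglyMeasurable (ae_of_all _ fun u => ?_)
  rw [Real.norm_of_nonneg (nU_nonneg' u)]
  simp only [Pi.add_apply]
  nlinarith [nU_nonneg' u]

set_option maxHeartbeats 1000000 in
/-- The key coupling estimate: the risk difference between two probability measures is bounded
by `cShift` times the square-root cost of any coupling. -/
lemma riskdiff_le_coupling (F E : X × Θ → Y) (L R B : ℝ)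
    (hL : 0 ≤ L) (hR : 0 ≤ R) (hB : 0 ≤ B)
    (hF : ∀ u v, ‖F u - F v‖ ≤ L * nU (u - v)) (hE : E ∈ Hclass R B)
    (μ μ' : Measure (X × Θ)) [IsProbabilityMeasure μ] [IsProbabilityMeasure μ']
    (hμ : Integrable (fun u => nU u ^ 2) μ) (hμ' : Integrable (fun u => nU u ^ 2) μ')
    (γ : Measure ((X × Θ) × (X × Θ))) [IsProbabilityMeasure γ]
    (h1 : γ.map Prod.fst = μ) (h2 : γ.map Prod.snd = μ') :
    |risk F E μ' - risk F E μ| ≤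
      cShift L R B F μ μ' * Real.sqrt (∫ p, nU (p.1 - p.2) ^ 2 ∂γ) := by
  obtain ⟨hEl, hE0⟩ := hE
  set C₁ : ℝ := L + R with hC₁def
  set C₂ : ℝ := ‖F 0‖ + B with hC₂def
  have hC₁ : 0 ≤ C₁ := by positivity
  have hC₂ : 0 ≤ C₂ := by positivity
  have hFc : Continuous F := continuous_of_nU_lip hL hF
  have hEc : Continuous E := continuous_of_nU_lip hR hEl
  set g : X × Θ → ℝ := fun u => ‖F u - E u‖ ^ 2 with hgdef
  have hgc : Continuous g := (hFc.sub hEc).norm.pow 2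
  have hFu : ∀ u, ‖F u‖ ≤ L * nU u + ‖F 0‖ := fun u => by
    calc ‖F u‖ = ‖F u - F 0 + F 0‖ := by rw [sub_add_cancel]
      _ ≤ ‖F u - F 0‖ + ‖F 0‖ := norm_add_le _ _
      _ ≤ L * nU u + ‖F 0‖ := by
          have := hF u 0; rw [sub_zero] at this; linarith
  have hEu : ∀ u, ‖E u‖ ≤ R * nU u + B := fun u => by
    calc ‖E u‖ = ‖E u - E 0 + E 0‖ := by rw [sub_add_cancel]
      _ ≤ ‖E u - E 0‖ + ‖E 0‖ := norm_add_le _ _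
      _ ≤ R * nU u + B := by
          have := hEl u 0; rw [sub_zero] at this; linarith
  have hFE : ∀ u, ‖F u - E u‖ ≤ C₁ * nU u + C₂ := fun u => by
    have := hFu u; have := hEu u
    calc ‖F u - E u‖ ≤ ‖F u‖ + ‖E u‖ := norm_sub_le _ _
      _ ≤ C₁ * nU u + C₂ := by rw [hC₁def, hC₂def]; linarith
  -- integrability of g with respect to any probability measure with finite second moment
  have hint : ∀ m : Measure (X × Θ), IsProbabilityMeasure m →
      Integrable (fun u => nU u ^ 2) m → Integrable g m := by
    intro m hm hm2
    haveI := hm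
    have hnm : Integrable (fun u => nU u) m := integrable_nU_of_sq hm2
    have hdom : Integrable (fun u => C₁ ^ 2 * nU u ^ 2 + 2 * C₁ * C₂ * nU u + C₂ ^ 2) m :=
      ((hm2.const_mul (C₁ ^ 2)).add (hnm.const_mul (2 * C₁ * C₂))).add (integrable_const _)
    refine hdom.mono' hgc.aestronglyMeasurable (ae_of_all _ fun u => ?_)
    rw [Real.norm_of_nonneg (by positivity)]
    have h := hFE u
    have h0 := norm_nonneg (F u - E u)
    have h1 := nU_nonneg' u
    show ‖F u - E u‖ ^ 2 ≤ _
    nlinarith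
  have hgμ : Integrable g μ := hint μ ‹_› hμ
  have hgμ' : Integrable g μ' := hint μ' ‹_› hμ'
  -- transfer to the coupling
  have hfst : Integrable (fun p : (X × Θ) × (X × Θ) => g p.1) γ := by
    refine integrable_comp_marginal measurable_fst ?_ ?_ <;> rw [h1]
    exacts [hgc.aestronglyMeasurable, hgμ]
  have hsnd : Integrable (fun p : (X × Θ) × (X × Θ) => g p.2) γ := by
    refine integrable_comp_marginal measurable_snd ?_ ?_ <;> rw [h2]
    exacts [hgc.aestronglyMeasurable, hgμ']
  have hrisk1 : risk F E μ = ∫ p, g p.1 ∂γ := by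
    rw [show risk F E μ = ∫ u, g u ∂μ from rfl, ← h1,
      integral_comp_marginal measurable_fst (by rw [h1]; exact hgc.aestronglyMeasurable)]
  have hrisk2 : risk F E μ' = ∫ p, g p.2 ∂γ := by
    rw [show risk F E μ' = ∫ u, g u ∂μ' from rfl, ← h2,
      integral_comp_marginal measurable_snd (by rw [h2]; exact hgc.aestronglyMeasurable)]
  have hdiff : risk F E μ' - risk F E μ = ∫ p, (g p.2 - g p.1) ∂γ := by
    rw [hrisk1, hrisk2, integral_sub hsnd hfst]
  -- the auxiliary functions on the coupling space
  set A : (X × Θ) × (X × Θ) → ℝ := fun p => nU p.1 + nU p.2 with hAdef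
  set D : (X × Θ) × (X × Θ) → ℝ := fun p => nU (p.1 - p.2) with hDdef
  have hAc : Continuous A := (continuous_nU.comp continuous_fst).add
    (continuous_nU.comp continuous_snd)
  have hDc : Continuous D := continuous_nU.comp (continuous_fst.sub continuous_snd)
  have hAnn : ∀ p, 0 ≤ A p := fun p => add_nonneg (nU_nonneg' _) (nU_nonneg' _)
  have hDnn : ∀ p, 0 ≤ D p := fun p => nU_nonneg' _
  -- second moments on the coupling space
  have ha2 : Integrable (fun p : (X × Θ) × (X × Θ) => nU p.1 ^ 2) γ := by
    refine integrable_comp_marginal (f := fun u => nU u ^ 2) measurable_fst ?_ ?_ <;> rw [h1]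
    exacts [(continuous_nU.pow 2).aestronglyMeasurable, hμ]
  have hb2 : Integrable (fun p : (X × Θ) × (X × Θ) => nU p.2 ^ 2) γ := by
    refine integrable_comp_marginal (f := fun u => nU u ^ 2) measurable_snd ?_ ?_ <;> rw [h2]
    exacts [(continuous_nU.pow 2).aestronglyMeasurable, hμ']
  have hd2 : Integrable (fun p => D p ^ 2) γ := by
    refine ((ha2.const_mul 2).add (hb2.const_mul 2)).mono'
      ((hDc.pow 2).aestronglyMeasurable) (ae_of_all _ fun p => ?_)
    rw [Real.norm_of_nonneg (by positivity)]
    simp only [Pi.add_apply, hDdef]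
    nlinarith [pow_le_pow_left₀ (nU_nonneg' (p.1 - p.2)) (nU_sub_le' p.1 p.2) 2,
      sq_nonneg (nU p.1 - nU p.2)]
  have hA2 : Integrable (fun p => A p ^ 2) γ := by
    refine ((ha2.const_mul 2).add (hb2.const_mul 2)).mono'
      ((hAc.pow 2).aestronglyMeasurable) (ae_of_all _ fun p => ?_)
    rw [Real.norm_of_nonneg (by positivity)]
    simp only [Pi.add_apply, hAdef]
    nlinarith [sq_nonneg (nU p.1 - nU p.2)]
  have hDint : Integrable D γ := by
    refine ((integrable_const (1 : ℝ)).add hd2).mono' hDc.aestronglyMeasurable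
      (ae_of_all _ fun p => ?_)
    rw [Real.norm_of_nonneg (hDnn p)]
    simp only [Pi.add_apply]
    nlinarith [hDnn p]
  have hADint : Integrable (fun p => A p * D p) γ := by
    refine (hA2.add hd2).mono' (hAc.mul hDc).aestronglyMeasurable (ae_of_all _ fun p => ?_)
    rw [Real.norm_of_nonneg (mul_nonneg (hAnn p) (hDnn p))]
    simp only [Pi.add_apply]
    nlinarith [hAnn p, hDnn p, sq_nonneg (A p - D p)]
  -- pointwise bound on the difference of g
  have hpt : ∀ p : (X × Θ) × (X × Θ),
      |g p.2 - g p.1| ≤ C₁ ^ 2 * (A p * D p) + 2 * C₁ * C₂ * D p := by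
    intro p
    set a : Y := F p.2 - E p.2 with hadef
    set b : Y := F p.1 - E p.1 with hbdef
    have hab : ‖a - b‖ ≤ C₁ * D p := by
      have heq : a - b = (F p.2 - F p.1) - (E p.2 - E p.1) := by
        rw [hadef, hbdef]; abel
      have h1 := hF p.2 p.1
      have h2 := hEl p.2 p.1
      rw [nU_sub_comm p.2 p.1] at h1 h2
      calc ‖a - b‖ ≤ ‖F p.2 - F p.1‖ + ‖E p.2 - E p.1‖ := by
            rw [heq]; exact norm_sub_le _ _
        _ ≤ C₁ * D p := by rw [hC₁def]; simp only [hDdef]; linarith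
    have ha := hFE p.2
    have hb := hFE p.1
    have habs : |‖a‖ - ‖b‖| ≤ ‖a - b‖ := abs_norm_sub_norm_le a b
    have heq2 : |g p.2 - g p.1| = |‖a‖ - ‖b‖| * (‖a‖ + ‖b‖) := by
      rw [show g p.2 - g p.1 = (‖a‖ - ‖b‖) * (‖a‖ + ‖b‖) by simp only [hgdef]; ring,
        abs_mul, abs_of_nonneg (add_nonneg (norm_nonneg a) (norm_nonneg b))]
    rw [heq2]
    have hsum : ‖a‖ + ‖b‖ ≤ C₁ * A p + 2 * C₂ := by
      simp only [hAdef]; nlinarith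
    have hD0 := hDnn p
    have hC₁D : |‖a‖ - ‖b‖| ≤ C₁ * D p := habs.trans hab
    have := mul_le_mul hC₁D hsum (by positivity) (by positivity)
    nlinarith [abs_nonneg (‖a‖ - ‖b‖), norm_nonneg a, norm_nonneg b, hAnn p]
  -- Hölder / Cauchy-Schwarz estimates
  have hconj : Real.HolderConjugate 2 2 := ⟨by norm_num, by norm_num, by norm_num⟩
  have two_eq : ENNReal.ofReal (2 : ℝ) = 2 := by simp
  have hrpow : ∀ f : (X × Θ) × (X × Θ) → ℝ, (∀ p, 0 ≤ f p) →
      ∀ p, f p ^ (2 : ℝ) = f p ^ (2 : ℕ) := fun f hf p => by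
    rw [show ((2 : ℝ) = ((2 : ℕ) : ℝ)) by norm_num, Real.rpow_natCast]
  have hMemA : MemLp A (ENNReal.ofReal (2:ℝ)) γ := by
    rw [two_eq]
    exact (memLp_two_iff_integrable_sq hAc.aestronglyMeasurable).mpr hA2
  have hMemD : MemLp D (ENNReal.ofReal (2:ℝ)) γ := by
    rw [two_eq]
    exact (memLp_two_iff_integrable_sq hDc.aestronglyMeasurable).mpr hd2
  have hCS : ∫ p, A p * D p ∂γ ≤
      Real.sqrt (∫ p, A p ^ 2 ∂γ) * Real.sqrt (∫ p, D p ^ 2 ∂γ) := by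
    have := integral_mul_le_Lp_mul_Lq_of_nonneg hconj (ae_of_all _ hAnn) (ae_of_all _ hDnn)
      hMemA hMemD
    calc ∫ p, A p * D p ∂γ
        ≤ (∫ p, A p ^ (2:ℝ) ∂γ) ^ (1/(2:ℝ)) * (∫ p, D p ^ (2:ℝ) ∂γ) ^ (1/(2:ℝ)) := this
      _ = Real.sqrt (∫ p, A p ^ 2 ∂γ) * Real.sqrt (∫ p, D p ^ 2 ∂γ) := by
          simp_rw [hrpow A hAnn, hrpow D hDnn]
          rw [← Real.sqrt_eq_rpow, ← Real.sqrt_eq_rpow]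
  have hMemOne : MemLp (fun _ : (X × Θ) × (X × Θ) => (1:ℝ)) (ENNReal.ofReal (2:ℝ)) γ := by
    rw [two_eq]; exact memLp_const 1
  have hCS1 : ∫ p, D p ∂γ ≤ Real.sqrt (∫ p, D p ^ 2 ∂γ) := by
    have := integral_mul_le_Lp_mul_Lq_of_nonneg hconj (ae_of_all _ hDnn)
      (ae_of_all _ fun _ => zero_le_one) hMemD hMemOne
    have hone : ∫ p : (X × Θ) × (X × Θ), (1:ℝ) ^ (2:ℝ) ∂γ = 1 := by
      simp
    calc ∫ p, D p ∂γ = ∫ p, D p * 1 ∂γ := by simp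
      _ ≤ (∫ p, D p ^ (2:ℝ) ∂γ) ^ (1/(2:ℝ)) * (∫ p, (1:ℝ) ^ (2:ℝ) ∂γ) ^ (1/(2:ℝ)) := this
      _ = Real.sqrt (∫ p, D p ^ 2 ∂γ) := by
          rw [hone]
          simp_rw [hrpow D hDnn]
          rw [← Real.sqrt_eq_rpow]
          norm_num
  -- identify marginal second moments
  have hmargA : ∫ p, nU p.1 ^ 2 ∂γ = ∫ u, nU u ^ 2 ∂μ := by
    rw [← h1, integral_comp_marginal (f := fun u => nU u ^ 2) measurable_fst
      (by rw [h1]; exact (continuous_nU.pow 2).aestronglyMeasurable)]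
  have hmargB : ∫ p, nU p.2 ^ 2 ∂γ = ∫ u, nU u ^ 2 ∂μ' := by
    rw [← h2, integral_comp_marginal (f := fun u => nU u ^ 2) measurable_snd
      (by rw [h2]; exact (continuous_nU.pow 2).aestronglyMeasurable)]
  have hA2le : ∫ p, A p ^ 2 ∂γ ≤ 2 * ((∫ u, nU u ^ 2 ∂μ) + ∫ u, nU u ^ 2 ∂μ') := by
    have hle : ∫ p, A p ^ 2 ∂γ ≤ ∫ p, (2 * nU p.1 ^ 2 + 2 * nU p.2 ^ 2) ∂γ := by
      refine integral_mono hA2 ((ha2.const_mul 2).add (hb2.const_mul 2)) fun p => ?_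
      simp only [hAdef]
      nlinarith [sq_nonneg (nU p.1 - nU p.2)]
    have heq : ∫ p, (2 * nU p.1 ^ 2 + 2 * nU p.2 ^ 2) ∂γ
        = 2 * ((∫ u, nU u ^ 2 ∂μ) + ∫ u, nU u ^ 2 ∂μ') := by
      rw [integral_add (ha2.const_mul 2) (hb2.const_mul 2), integral_const_mul,
        integral_const_mul, hmargA, hmargB]
      ring
    linarith
  -- put everything together
  set r : ℝ := Real.sqrt (∫ p, D p ^ 2 ∂γ) with hrdef
  have hr0 : 0 ≤ r := Real.sqrt_nonneg _
  have hintabs : ∫ p, |g p.2 - g p.1| ∂γ ≤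
      C₁ ^ 2 * (∫ p, A p * D p ∂γ) + 2 * C₁ * C₂ * ∫ p, D p ∂γ := by
    have hΦint : Integrable (fun p => C₁ ^ 2 * (A p * D p) + 2 * C₁ * C₂ * D p) γ :=
      (hADint.const_mul _).add (hDint.const_mul _)
    have h := integral_mono (hsnd.sub hfst).abs hΦint hpt
    rw [integral_add (hADint.const_mul _) (hDint.const_mul _), integral_const_mul,
      integral_const_mul] at h
    exact h
  have hfinal : |risk F E μ' - risk F E μ| ≤
      C₁ ^ 2 * Real.sqrt (2 * ((∫ u, nU u ^ 2 ∂μ) + ∫ u, nU u ^ 2 ∂μ')) * r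
        + 2 * C₁ * C₂ * r := by
    have habs : |∫ p, (g p.2 - g p.1) ∂γ| ≤ ∫ p, |g p.2 - g p.1| ∂γ := by
      simpa [Real.norm_eq_abs] using
        norm_integral_le_integral_norm (μ := γ) (f := fun p => g p.2 - g p.1)
    have hsqA : Real.sqrt (∫ p, A p ^ 2 ∂γ) ≤
        Real.sqrt (2 * ((∫ u, nU u ^ 2 ∂μ) + ∫ u, nU u ^ 2 ∂μ')) :=
      Real.sqrt_le_sqrt hA2le
    have hAD : ∫ p, A p * D p ∂γ ≤
        Real.sqrt (2 * ((∫ u, nU u ^ 2 ∂μ) + ∫ u, nU u ^ 2 ∂μ')) * r := by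
      refine hCS.trans ?_
      exact mul_le_mul_of_nonneg_right hsqA hr0
    have hD1 : ∫ p, D p ∂γ ≤ r := hCS1
    rw [hdiff]
    calc |∫ p, (g p.2 - g p.1) ∂γ| ≤ ∫ p, |g p.2 - g p.1| ∂γ := habs
      _ ≤ C₁ ^ 2 * (∫ p, A p * D p ∂γ) + 2 * C₁ * C₂ * ∫ p, D p ∂γ := hintabs
      _ ≤ C₁ ^ 2 * (Real.sqrt (2 * ((∫ u, nU u ^ 2 ∂μ) + ∫ u, nU u ^ 2 ∂μ')) * r)
            + 2 * C₁ * C₂ * r := by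
          have h1 : (0:ℝ) ≤ C₁ ^ 2 := by positivity
          have h2 : (0:ℝ) ≤ 2 * C₁ * C₂ := by positivity
          have := mul_le_mul_of_nonneg_left hAD h1
          have := mul_le_mul_of_nonneg_left hD1 h2
          linarith
      _ = _ := by ring
  calc |risk F E μ' - risk F E μ| ≤ _ := hfinal
    _ = cShift L R B F μ μ' * r := by
        rw [cShift, hC₁def, hC₂def]; ring
    _ = cShift L R B F μ μ' * Real.sqrt (∫ p, nU (p.1 - p.2) ^ 2 ∂γ) := rfl


lemma cShift_nonneg' {L R B : ℝ} (hL : 0 ≤ L) (hR : 0 ≤ R) (hB : 0 ≤ B)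
    (F : X × Θ → Y) (μ μ' : Measure (X × Θ)) : 0 ≤ cShift L R B F μ μ' := by
  have h1 : (0:ℝ) ≤ L + R := by linarith
  have h2 : (0:ℝ) ≤ ‖F 0‖ + B := by have := norm_nonneg (F 0); linarith
  exact add_nonneg (mul_nonneg (sq_nonneg _) (Real.sqrt_nonneg _))
    (mul_nonneg (by linarith) h2)

/-- Lifting a coupling of the `Θ`-marginals to a coupling of the product measures:
the Wasserstein distance of the products is bounded by that of the `Θ`-marginals. -/
lemma W2_prod_le (ρ : Measure X) [IsProbabilityMeasure ρ]
    (π₁ π₂ : Measure Θ) [IsProbabilityMeasure π₁] [IsProbabilityMeasure π₂] :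
    W2 (fun u v : X × Θ => nU (u - v)) (ρ.prod π₁) (ρ.prod π₂) ≤
      W2 (fun a b : Θ => ‖a - b‖) π₁ π₂ := by
  unfold W2
  refine le_csInf ⟨_, π₁.prod π₂, inferInstance, by simp, by simp, rfl⟩ ?_
  rintro r ⟨γΘ, hγp, hγ1, hγ2, rfl⟩
  haveI := hγp
  set T : X × (Θ × Θ) → (X × Θ) × (X × Θ) := fun q => ((q.1, q.2.1), (q.1, q.2.2)) with hT
  have hTm : Measurable T :=
    (measurable_fst.prodMk measurable_snd.fst).prodMk
      (measurable_fst.prodMk measurable_snd.snd)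
  refine csInf_le ⟨0, ?_⟩ ?_
  · rintro x ⟨γ, _, _, _, rfl⟩
    exact Real.sqrt_nonneg _
  · haveI : IsProbabilityMeasure ((ρ.prod γΘ).map T) :=
      Measure.isProbabilityMeasure_map hTm.aemeasurable
    refine ⟨(ρ.prod γΘ).map T, inferInstance, ?_, ?_, ?_⟩
    · rw [Measure.map_map measurable_fst hTm]
      have hco : (Prod.fst ∘ T) = Prod.map (id : X → X) (Prod.fst : Θ × Θ → Θ) := rfl
      rw [hco, ← Measure.map_prod_map _ _ measurable_id measurable_fst, Measure.map_id, hγ1]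
    · rw [Measure.map_map measurable_snd hTm]
      have hco : (Prod.snd ∘ T) = Prod.map (id : X → X) (Prod.snd : Θ × Θ → Θ) := rfl
      rw [hco, ← Measure.map_prod_map _ _ measurable_id measurable_snd, Measure.map_id, hγ2]
    · show Real.sqrt (∫ p : Θ × Θ, ‖p.1 - p.2‖ ^ 2 ∂γΘ)
          = Real.sqrt (∫ p : (X × Θ) × (X × Θ), nU (p.1 - p.2) ^ 2 ∂((ρ.prod γΘ).map T))
      congr 1
      have hmeas : AEStronglyMeasurable
          (fun p : (X × Θ) × (X × Θ) => nU (p.1 - p.2) ^ 2) (((ρ.prod γΘ)).map T) :=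
        ((continuous_nU.comp (continuous_fst.sub continuous_snd)).pow 2).aestronglyMeasurable
      rw [eq_comm, integral_map hTm.aemeasurable hmeas]
      have hptw : ∀ q : X × (Θ × Θ),
          nU ((T q).1 - (T q).2) ^ 2 = ‖q.2.1 - q.2.2‖ ^ 2 := fun q => by
        rw [hT]; simp only []
        rw [nU_pair_sub]
      have hmeas2 : AEStronglyMeasurable (fun p : Θ × Θ => ‖p.1 - p.2‖ ^ 2)
          ((ρ.prod γΘ).map Prod.snd) :=
        ((continuous_norm.comp (continuous_fst.sub continuous_snd)).pow 2).aestronglyMeasurable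
      have h := integral_map (μ := ρ.prod γΘ) measurable_snd.aemeasurable hmeas2
      rw [Measure.map_snd_prod] at h
      simp only [measure_univ, one_smul] at h
      rw [h]
      exact integral_congr_ae (ae_of_all _ hptw)

/-- Finite second moment of a product of probability measures with finite second moments. -/
lemma integrable_nU_sq_prod (ρ : Measure X) [IsProbabilityMeasure ρ]
    (π : Measure Θ) [IsProbabilityMeasure π]
    (hρ : Integrable (fun x => ‖x‖ ^ 2) ρ) (hπ : Integrable (fun a => ‖a‖ ^ 2) π) :
    Integrable (fun u => nU u ^ 2) (ρ.prod π) := by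
  have h1 : Integrable (fun u : X × Θ => ‖u.1‖ ^ 2) (ρ.prod π) := by
    refine integrable_comp_marginal (f := fun x => ‖x‖ ^ 2) measurable_fst ?_ ?_ <;>
      rw [Measure.map_fst_prod] <;> simp only [measure_univ, one_smul]
    exacts [(continuous_norm.pow 2).aestronglyMeasurable, hρ]
  have h2 : Integrable (fun u : X × Θ => ‖u.2‖ ^ 2) (ρ.prod π) := by
    refine integrable_comp_marginal (f := fun a => ‖a‖ ^ 2) measurable_snd ?_ ?_ <;>
      rw [Measure.map_snd_prod] <;> simp only [measure_univ, one_smul]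
    exacts [(continuous_norm.pow 2).aestronglyMeasurable, hπ]
  simp_rw [nU_sq']
  exact h1.add h2

lemma isProbabilityMeasure_empirical {N : ℕ} (hN : 0 < N) (θs : Fin N → Θ) :
    IsProbabilityMeasure ((N : ℝ≥0∞)⁻¹ • ∑ i, Measure.dirac (θs i)) := by
  constructor
  rw [Measure.smul_apply, Measure.finset_sum_apply]
  simp only [measure_univ, Finset.sum_const, Finset.card_univ, Fintype.card_fin, nsmul_eq_mul,
    mul_one, smul_eq_mul]
  have hN0 : (N : ℝ≥0∞) ≠ 0 := by
    simp only [ne_eq, Nat.cast_eq_zero]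
    exact hN.ne'
  exact ENNReal.inv_mul_cancel hN0 (ENNReal.natCast_ne_top N)

lemma integrable_sq_empirical {N : ℕ} (hN : 0 < N) (θs : Fin N → Θ) :
    Integrable (fun a => ‖a‖ ^ 2) ((N : ℝ≥0∞)⁻¹ • ∑ i, Measure.dirac (θs i)) := by
  refine Integrable.smul_measure ?_ (by simp [hN.ne'])
  refine integrable_finset_sum_measure.mpr fun i _ => ?_
  refine ⟨(continuous_norm.pow 2).aestronglyMeasurable, ?_⟩
  rw [HasFiniteIntegral]
  rw [lintegral_dirac]
  exact ENNReal.coe_lt_top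

end MeasureAux

/-- **Theorem, finite-chain approximation: quantitative bound.**
With deployment law `ν = ρ ⊗ π` and empirical training law `ν̂_N = ρ ⊗ π̂_N`,
`0 ≤ J_ν(ν̂_N) − inf_{E∈H} R_ν(E) ≤ 2 c(ν̂_N, ν) W₂(π̂_N, π)`. -/
theorem finite_chain_bound (F : X × Θ → Y) (L R B : ℝ)
    (hL : 0 ≤ L) (hR : 0 ≤ R) (hB : 0 ≤ B)
    (hF : ∀ u v : X × Θ, ‖F u - F v‖ ≤ L * nU (u - v))
    (ρ : Measure X) [IsProbabilityMeasure ρ] (hρ : Integrable (fun x => ‖x‖ ^ 2) ρ)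
    (π : Measure Θ) [IsProbabilityMeasure π] (hπ : Integrable (fun a => ‖a‖ ^ 2) π)
    (ν : Measure (X × Θ)) (hν : ν = ρ.prod π)
    (N : ℕ) (hN : 0 < N) (θs : Fin N → Θ)
    (πhat : Measure Θ) (hπhat : πhat = (N : ℝ≥0∞)⁻¹ • ∑ i, Measure.dirac (θs i))
    (νhat : Measure (X × Θ)) (hνhat : νhat = ρ.prod πhat) :
    0 ≤ Jobj L R B F ν νhat - sInf ((fun E => risk F E ν) '' (Hclass R B : Set (X × Θ → Y))) ∧
      Jobj L R B F ν νhat - sInf ((fun E => risk F E ν) '' (Hclass R B : Set (X × Θ → Y)))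
        ≤ 2 * cShift L R B F νhat ν * W2 (fun a b : Θ => ‖a - b‖) πhat π := by
  subst hν
  subst hπhat
  subst hνhat
  haveI hπhp : IsProbabilityMeasure ((N : ℝ≥0∞)⁻¹ • ∑ i, Measure.dirac (θs i)) :=
    isProbabilityMeasure_empirical hN θs
  set πh : Measure Θ := (N : ℝ≥0∞)⁻¹ • ∑ i, Measure.dirac (θs i) with hπh
  have hπh2 : Integrable (fun a => ‖a‖ ^ 2) πh := integrable_sq_empirical hN θs
  have hM : Integrable (fun u => nU u ^ 2) (ρ.prod π) := integrable_nU_sq_prod ρ π hρ hπ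
  have hMh : Integrable (fun u => nU u ^ 2) (ρ.prod πh) := integrable_nU_sq_prod ρ πh hρ hπh2
  have hH0 : (fun _ : X × Θ => (0 : Y)) ∈ (Hclass R B : Set (X × Θ → Y)) := by
    refine ⟨fun u v => ?_, by simpa using hB⟩
    simp only [sub_zero, norm_zero]
    exact mul_nonneg hR (nU_nonneg' _)
  have hrisk_nonneg : ∀ (m : Measure (X × Θ)) (y : ℝ),
      y ∈ (fun E => risk F E m) '' (Hclass R B : Set (X × Θ → Y)) → 0 ≤ y := by
    rintro m y ⟨E, _, rfl⟩
    exact integral_nonneg fun u => by positivity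
  have hbdd : ∀ m : Measure (X × Θ),
      BddBelow ((fun E => risk F E m) '' (Hclass R B : Set (X × Θ → Y))) :=
    fun m => ⟨0, fun y hy => hrisk_nonneg m y hy⟩
  have hne : ∀ m : Measure (X × Θ),
      ((fun E => risk F E m) '' (Hclass R B : Set (X × Θ → Y))).Nonempty :=
    fun m => ⟨_, ⟨_, hH0, rfl⟩⟩
  set c := cShift L R B F (ρ.prod πh) (ρ.prod π) with hc
  set w := W2 (fun u v : X × Θ => nU (u - v)) (ρ.prod πh) (ρ.prod π) with hw
  have hc0 : 0 ≤ c := cShift_nonneg' hL hR hB F _ _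
  set SW := { r : ℝ | ∃ γ : Measure ((X × Θ) × (X × Θ)), IsProbabilityMeasure γ ∧
      γ.map Prod.fst = ρ.prod πh ∧ γ.map Prod.snd = ρ.prod π ∧
      r = Real.sqrt (∫ p, nU (p.1 - p.2) ^ 2 ∂γ) } with hSWdef
  have hWrfl : w = sInf SW := rfl
  have hSWne : SW.Nonempty :=
    ⟨_, (ρ.prod πh).prod (ρ.prod π), inferInstance, by simp, by simp, rfl⟩
  have hSW0 : ∀ r ∈ SW, 0 ≤ r := by
    rintro r ⟨γ, _, _, _, rfl⟩
    exact Real.sqrt_nonneg _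
  have hw0 : 0 ≤ w := by
    rw [hWrfl]; exact sInf_nonneg_of_forall hSW0
  have hT : ∀ E ∈ (Hclass R B : Set (X × Θ → Y)),
      |risk F E (ρ.prod π) - risk F E (ρ.prod πh)| ≤ c * w := by
    intro E hE
    rw [hWrfl]
    refine le_mul_sInf hc0 hSWne hSW0 ?_
    rintro r ⟨γ, hγ, hγ1, hγ2, rfl⟩
    haveI := hγ
    exact riskdiff_le_coupling F E L R B hL hR hB hF hE _ _ hMh hM γ hγ1 hγ2
  set I₁ := sInf ((fun E => risk F E (ρ.prod π)) '' (Hclass R B : Set (X × Θ → Y))) with hI₁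
  set I₂ := sInf ((fun E => risk F E (ρ.prod πh)) '' (Hclass R B : Set (X × Θ → Y))) with hI₂
  have hI12 : I₁ ≤ I₂ + c * w := by
    rw [← sub_le_iff_le_add, hI₂]
    refine le_csInf (hne _) ?_
    rintro y ⟨E, hE, rfl⟩
    have h1 : I₁ ≤ risk F E (ρ.prod π) := csInf_le (hbdd _) ⟨E, hE, rfl⟩
    have h2 := (abs_le.mp (hT E hE)).2
    simp only at h1 h2 ⊢
    linarith
  have hI21 : I₂ ≤ I₁ + c * w := by
    rw [← sub_le_iff_le_add, hI₁]
    refine le_csInf (hne _) ?_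
    rintro y ⟨E, hE, rfl⟩
    have h1 : I₂ ≤ risk F E (ρ.prod πh) := csInf_le (hbdd _) ⟨E, hE, rfl⟩
    have h2 := (abs_le.mp (hT E hE)).1
    simp only at h1 h2 ⊢
    linarith
  have hlift : w ≤ W2 (fun a b : Θ => ‖a - b‖) πh π := by
    rw [hw]; exact W2_prod_le ρ πh π
  have hJ : Jobj L R B F (ρ.prod π) (ρ.prod πh) = I₂ + c * w := rfl
  constructor
  · rw [hJ]; linarith
  · rw [hJ]
    have h2 : 2 * c * w ≤ 2 * c * W2 (fun a b : Θ => ‖a - b‖) πh π :=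
      mul_le_mul_of_nonneg_left hlift (by linarith)
    linarith
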